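/- Let A ∈ B(H) be positive and N, E, X ∈ B(H). Form the block operator T = [[N, E],[0, X]] on H ⊕ H with respect to the positive operator A ⊕ A. Assume N is an A-isometry (N*AN = A), E = NEX, and N*AE = AEX. Then T is (A⊕A)-isosymmetric (i.e. T*²(A⊕A)T − T*(A⊕A)T² − T*(A⊕A) + (A⊕A)T = 0) if and only if X is A-isosymmetric (X*²AX − X*AX² − X*A + AX = 0). -/

import Mathlib

open ContinuousLinearMap

/-- An operator `S` is `B`-isosymmetric. -/
def IsIsoSym {K : Type*} [NormedAddCommGroup K] [InnerProductSpace ℂ K]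
    [CompleteSpace K] (B S : K →L[ℂ] K) : Prop :=
  ((adjoint S) ^ 2) ∘L B ∘L S - (adjoint S) ∘L B ∘L (S ^ 2) - (adjoint S) ∘L B + B ∘L S = 0

set_option maxHeartbeats 1000000 in
lemma isoSym_iff_inner {K : Type*} [NormedAddCommGroup K] [InnerProductSpace ℂ K]
    [CompleteSpace K] (B S : K →L[ℂ] K) :
    IsIsoSym B S ↔ ∀ x y : K,
      (inner ℂ (S (S x)) (B (S y)) : ℂ) - inner ℂ (S x) (B (S (S y))) - inner ℂ (S x) (B y)
        + inner ℂ x (B (S y)) = 0 := by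
  have key : ∀ x y : K, (inner ℂ x (((((adjoint S) ^ 2) ∘L B ∘L S - (adjoint S) ∘L B ∘L (S ^ 2)
      - (adjoint S) ∘L B + B ∘L S : K →L[ℂ] K)) y) : ℂ)
      = inner ℂ (S (S x)) (B (S y)) - inner ℂ (S x) (B (S (S y))) - inner ℂ (S x) (B y)
        + inner ℂ x (B (S y)) := by
    intro x y
    simp [sq, ContinuousLinearMap.mul_apply, inner_sub_right, inner_add_right,
      ContinuousLinearMap.adjoint_inner_right]
  constructor
  · intro h x y
    rw [← key, h]
    simp
  · intro h
    unfold IsIsoSym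
    ext y
    apply ext_inner_left ℂ
    intro v
    rw [key]
    simpa using h v y

theorem block_triangular_isosymmetric {H : Type*} [NormedAddCommGroup H]
    [InnerProductSpace ℂ H] [CompleteSpace H] (A N E X : H →L[ℂ] H) (hA : A.IsPositive)
    (hN : (adjoint N) ∘L A ∘L N = A) (hE : E = N ∘L E ∘L X)
    (hNAE : (adjoint N) ∘L A ∘L E = A ∘L E ∘L X) :
    (let e : WithLp 2 (H × H) ≃L[ℂ] H × H := WithLp.prodContinuousLinearEquiv 2 ℂ H H
     let Tblock : WithLp 2 (H × H) →L[ℂ] WithLp 2 (H × H) :=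
       (e.symm : (H × H) →L[ℂ] WithLp 2 (H × H)) ∘L
         ((N ∘L ContinuousLinearMap.fst ℂ H H + E ∘L ContinuousLinearMap.snd ℂ H H).prod
            (X ∘L ContinuousLinearMap.snd ℂ H H)) ∘L
         (e : WithLp 2 (H × H) →L[ℂ] H × H)
     let Ablock : WithLp 2 (H × H) →L[ℂ] WithLp 2 (H × H) :=
       (e.symm : (H × H) →L[ℂ] WithLp 2 (H × H)) ∘L (A.prodMap A) ∘L
         (e : WithLp 2 (H × H) →L[ℂ] H × H)
     IsIsoSym Ablock Tblock) ↔ IsIsoSym A X := by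
  have hA' : adjoint A = A := hA.isSelfAdjoint.adjoint_eq
  have hN' : ∀ b, adjoint N (A (N b)) = A b := fun b => DFunLike.congr_fun hN b
  have hNAE' : ∀ b, adjoint N (A (E b)) = A (E (X b)) := fun b => DFunLike.congr_fun hNAE b
  have l1 : ∀ a b : H, (inner ℂ (N a) (A (N b)) : ℂ) = inner ℂ a (A b) := by
    intro a b
    rw [← hN' b, ContinuousLinearMap.adjoint_inner_right]
  have l2 : ∀ a b : H, (inner ℂ (N a) (A (E b)) : ℂ) = inner ℂ a (A (E (X b))) := by
    intro a b
    rw [← hNAE' b, ContinuousLinearMap.adjoint_inner_right]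
  have lA : ∀ a b : H, (inner ℂ (A a) b : ℂ) = inner ℂ a (A b) := by
    intro a b
    conv_lhs => rw [← hA', ContinuousLinearMap.adjoint_inner_left]
  have l3 : ∀ a b : H, (inner ℂ (E a) (A (N b)) : ℂ) = inner ℂ (E (X a)) (A b) := by
    intro a b
    calc (inner ℂ (E a) (A (N b)) : ℂ)
        = starRingEnd ℂ (inner ℂ (A (N b)) (E a) : ℂ) := (inner_conj_symm _ _).symm
      _ = starRingEnd ℂ (inner ℂ (N b) (A (E a)) : ℂ) := by rw [lA]
      _ = starRingEnd ℂ (inner ℂ b (A (E (X a))) : ℂ) := by rw [l2]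
      _ = inner ℂ (A (E (X a))) b := inner_conj_symm _ _
      _ = inner ℂ (E (X a)) (A b) := lA _ _
  simp only [isoSym_iff_inner]
  constructor
  · intro h a b
    have := h ((WithLp.prodContinuousLinearEquiv 2 ℂ H H).symm (0, a))
      ((WithLp.prodContinuousLinearEquiv 2 ℂ H H).symm (0, b))
    simp only [ContinuousLinearMap.coe_comp', Function.comp_apply,
      ContinuousLinearEquiv.coe_coe, WithLp.prodContinuousLinearEquiv_apply,
      WithLp.prodContinuousLinearEquiv_symm_apply, Equiv.apply_symm_apply,
      ContinuousLinearMap.prod_apply, ContinuousLinearMap.add_apply,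
      ContinuousLinearMap.coe_fst', ContinuousLinearMap.coe_snd',
      ContinuousLinearMap.coe_prodMap', Prod.map_apply, Prod.map_fst, Prod.map_snd, WithLp.prod_inner_apply,
      WithLp.ofLp_toLp, WithLp.toLp_ofLp,
      map_add, map_zero, zero_add, add_zero, inner_add_left, inner_add_right,
      inner_zero_left, inner_zero_right, l1, l2, l3] at this
    linear_combination this
  · intro h x y
    simp only [ContinuousLinearMap.coe_comp', Function.comp_apply,
      ContinuousLinearEquiv.coe_coe, WithLp.prodContinuousLinearEquiv_apply,
      WithLp.prodContinuousLinearEquiv_symm_apply, Equiv.apply_symm_apply,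
      ContinuousLinearMap.prod_apply, ContinuousLinearMap.add_apply,
      ContinuousLinearMap.coe_fst', ContinuousLinearMap.coe_snd',
      ContinuousLinearMap.coe_prodMap', Prod.map_apply, Prod.map_fst, Prod.map_snd, WithLp.prod_inner_apply,
      WithLp.ofLp_toLp, WithLp.toLp_ofLp,
      map_add, map_zero, zero_add, add_zero, inner_add_left, inner_add_right,
      inner_zero_left, inner_zero_right, l1, l2, l3]
    linear_combination h (Prod.snd (WithLp.ofLp x)) (Prod.snd (WithLp.ofLp y))
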